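/- Let x, y, z be complex numbers and let u be a function holomorphic on a disk |t| < r (0 < r ≤ 1) satisfying t(1−t²) u″ + ( (1−x)(1−t²) − 2ty ) u′ + 2(xy − z²) u = 0. Define v(t) = (1−t)^y ( t u′(t) − x u(t) ) (principal branch of (1−t)^y). Then v is holomorphic on |t| < min(r,1), v(0) = −x u(0), and v satisfies t(1−t²) v″ − ( x(1−t²) − 2(y−1)t² ) v′ − ( (2z² − xy) + y(y+x−1) t ) v = 0. -/

import Mathlib

open Complex Filter Metric Finset

attribute [local instance] Classical.propDecidable

noncomputable section

/-- Condition on the summation variables of the level-two multiple polylogarithm: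
`m` is strictly increasing, `m i ≡ i+1 (mod 2)` (so `m 0` is odd, `m 1` even, ...),
and all `m i` are positive. -/
def athCond (n : ℕ) (m : Fin n → ℕ) : Prop :=
  StrictMono m ∧ ∀ i : Fin n, m i % 2 = ((i : ℕ) + 1) % 2 ∧ 0 < m i

/-- The last entry `m n` of the summation sequence (junk value `0` for depth `0`). -/
def lastExp {n : ℕ} (m : Fin n → ℕ) : ℕ :=
  if h : 0 < n then m ⟨n - 1, Nat.sub_lt h Nat.one_pos⟩ else 0

/-- The level-two multiple polylogarithm
`Ath(𝐤; t) = Σ_{0<m₁<⋯<mₙ, mᵢ ≡ i (2)} t^{mₙ}/(m₁^{k₁}⋯mₙ^{kₙ})`, with `Ath(∅;t) = 1`. -/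
def Ath {n : ℕ} (k : Fin n → ℕ) (t : ℂ) : ℂ :=
  ∑' m : Fin n → ℕ,
    if athCond n m then t ^ lastExp m / ∏ i, ((m i : ℂ) ^ k i) else 0

/-- The multiple T-value `T(𝐤) = 2^n Σ_{0<m₁<⋯<mₙ, mᵢ ≡ i (2)} 1/(m₁^{k₁}⋯mₙ^{kₙ})`. -/
def Tval {n : ℕ} (k : Fin n → ℕ) : ℝ :=
  2 ^ n * ∑' m : Fin n → ℕ,
    if athCond n m then (∏ i, ((m i : ℝ) ^ k i))⁻¹ else 0

/-- `κ` is an index of weight `k`, depth `n` and height `s`. -/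
def IdxCond (k n s : ℕ) (κ : Fin n → ℕ) : Prop :=
  (∀ i, 1 ≤ κ i) ∧ (∑ i, κ i) = k ∧ (Finset.univ.filter fun i => 2 ≤ κ i).card = s

/-- `κ` is an admissible index of weight `k`, depth `n` and height `s`. -/
def IdxCond0 (k n s : ℕ) (κ : Fin n → ℕ) : Prop :=
  IdxCond k n s κ ∧ ∀ h : 0 < n, 2 ≤ κ ⟨n - 1, Nat.sub_lt h Nat.one_pos⟩

/-- `G(k,n,s;t) = 2^n Σ_{𝐤 ∈ I(k,n,s)} Ath(𝐤;t)`. -/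
def G (k n s : ℕ) (t : ℂ) : ℂ :=
  2 ^ n * ∑' κ : Fin n → ℕ, if IdxCond k n s κ then Ath κ t else 0

/-- `G₀(k,n,s;t) = 2^n Σ_{𝐤 ∈ I₀(k,n,s)} Ath(𝐤;t)`. -/
def G0 (k n s : ℕ) (t : ℂ) : ℂ :=
  2 ^ n * ∑' κ : Fin n → ℕ, if IdxCond0 k n s κ then Ath κ t else 0

/-- `Σ_{𝐤 ∈ I₀(k,n,s)} T(𝐤)`. -/
def sumT0 (k n s : ℕ) : ℝ :=
  ∑' κ : Fin n → ℕ, if IdxCond0 k n s κ then Tval κ else 0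

/-- One term of the generating function `Φ`. -/
def PhiTerm (x y z : ℂ) (p : ℕ × ℕ × ℕ) (t : ℂ) : ℂ :=
  if 1 ≤ p.1 ∧ 1 ≤ p.2.1 then
    G p.1 p.2.1 p.2.2 t * x ^ (p.1 - p.2.1 - p.2.2) * y ^ (p.2.1 - p.2.2) * z ^ (2 * p.2.2)
  else 0

/-- `Φ(x,y,z;t) = 1 + Σ_{k,n≥1, s≥0} G(k,n,s;t) x^{k−n−s} y^{n−s} z^{2s}`. -/
def Phi (x y z t : ℂ) : ℂ := 1 + ∑' p : ℕ × ℕ × ℕ, PhiTerm x y z p t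

/-- One term of the generating function `Φ₀`. -/
def Phi0Term (x y z : ℂ) (p : ℕ × ℕ × ℕ) (t : ℂ) : ℂ :=
  if 1 ≤ p.1 ∧ 1 ≤ p.2.1 ∧ 1 ≤ p.2.2 then
    G0 p.1 p.2.1 p.2.2 t * x ^ (p.1 - p.2.1 - p.2.2) * y ^ (p.2.1 - p.2.2)
      * z ^ (2 * (p.2.2 - 1))
  else 0

/-- `Φ₀(x,y,z;t) = Σ_{k,n,s≥1} G₀(k,n,s;t) x^{k−n−s} y^{n−s} z^{2(s−1)}`. -/
def Phi0 (x y z t : ℂ) : ℂ := ∑' p : ℕ × ℕ × ℕ, Phi0Term x y z p t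

/-- The shifted factorial `(a)ₙ = a(a+1)⋯(a+n−1)`. -/
def poch (a : ℂ) (n : ℕ) : ℂ := ∏ j ∈ Finset.range n, (a + j)

/-- The Gauss hypergeometric series `F(a,b,c;t)`. -/
def hypF (a b c t : ℂ) : ℂ :=
  ∑' n : ℕ, poch a n * poch b n / ((n.factorial : ℂ) * poch c n) * t ^ n
/-- The Ishkhanyan–Suominen transform: if `u` is holomorphic on `|t| < r` and satisfies
the Heun-type equation, then `v(t) = (1−t)^y (t u′(t) − x u(t))` is holomorphic on
`|t| < min r 1`, has `v(0) = −x u(0)`, and satisfies the transformed equation. -/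
theorem ishkhanyan_suominen_transform (x y z : ℂ) (r : ℝ) (hr0 : 0 < r) (hr1 : r ≤ 1)
    (u : ℂ → ℂ) (hu : DifferentiableOn ℂ u (ball (0 : ℂ) r))
    (hode : ∀ t ∈ ball (0 : ℂ) r,
      t * (1 - t ^ 2) * deriv (deriv u) t
        + ((1 - x) * (1 - t ^ 2) - 2 * t * y) * deriv u t
        + 2 * (x * y - z ^ 2) * u t = 0) :
    DifferentiableOn ℂ (fun t => (1 - t) ^ y * (t * deriv u t - x * u t))
        (ball (0 : ℂ) (min r 1)) ∧
    (1 - (0 : ℂ)) ^ y * ((0 : ℂ) * deriv u 0 - x * u 0) = -x * u 0 ∧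
    ∀ t ∈ ball (0 : ℂ) (min r 1),
      t * (1 - t ^ 2) * deriv (deriv (fun t => (1 - t) ^ y * (t * deriv u t - x * u t))) t
        - (x * (1 - t ^ 2) - 2 * (y - 1) * t ^ 2)
          * deriv (fun t => (1 - t) ^ y * (t * deriv u t - x * u t)) t
        - ((2 * z ^ 2 - x * y) + y * (y + x - 1) * t)
          * ((1 - t) ^ y * (t * deriv u t - x * u t)) = 0 := by
  have hAn : AnalyticOnNhd ℂ u (ball 0 r) := hu.analyticOnNhd isOpen_ball
  have hAn1 : AnalyticOnNhd ℂ (deriv u) (ball 0 r) := hAn.deriv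
  have hAn2 : AnalyticOnNhd ℂ (deriv (deriv u)) (ball 0 r) := hAn1.deriv
  have hu1 : ∀ t ∈ ball (0:ℂ) r, HasDerivAt u (deriv u t) t :=
    fun t ht => (hAn t ht).differentiableAt.hasDerivAt
  have hu2 : ∀ t ∈ ball (0:ℂ) r, HasDerivAt (deriv u) (deriv (deriv u) t) t :=
    fun t ht => (hAn1 t ht).differentiableAt.hasDerivAt
  have hu3 : ∀ t ∈ ball (0:ℂ) r,
      HasDerivAt (deriv (deriv u)) (deriv (deriv (deriv u)) t) t :=
    fun t ht => (hAn2 t ht).differentiableAt.hasDerivAt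
  have hsub : ball (0:ℂ) (min r 1) ⊆ ball 0 r := ball_subset_ball (min_le_left _ _)
  have hsub1 : ball (0:ℂ) (min r 1) ⊆ ball 0 1 := ball_subset_ball (min_le_right _ _)
  have hslit : ∀ t ∈ ball (0:ℂ) (min r 1), (1 - t) ∈ slitPlane := by
    intro t ht
    have h1 : ‖t‖ < 1 := by
      have := mem_ball_zero_iff.mp (hsub1 ht); simpa using this
    refine Or.inl ?_
    have : |t.re| < 1 := lt_of_le_of_lt (Complex.abs_re_le_norm t) h1
    simp only [Complex.sub_re, Complex.one_re]
    linarith [abs_lt.mp this]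
  have h1t : ∀ t ∈ ball (0:ℂ) (min r 1), (1 : ℂ) - t ≠ 0 :=
    fun t ht => slitPlane_ne_zero (hslit t ht)
  -- derivative of the power factor
  have hg : ∀ (c : ℂ), ∀ t ∈ ball (0:ℂ) (min r 1),
      HasDerivAt (fun s : ℂ => (1 - s) ^ c) (-(c * (1 - t) ^ (c - 1))) t := by
    intro c t ht
    have h1 : HasDerivAt (fun s : ℂ => 1 - s) (0 - 1) t :=
      (hasDerivAt_const t (1:ℂ)).sub (hasDerivAt_id t)
    have := h1.cpow_const (c := c) (hslit t ht)
    convert this using 1; ring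
  -- derivative of w = t u' - x u
  have hw : ∀ t ∈ ball (0:ℂ) r,
      HasDerivAt (fun s => s * deriv u s - x * u s)
        ((1 - x) * deriv u t + t * deriv (deriv u) t) t := by
    intro t ht
    have := ((hasDerivAt_id t).mul (hu2 t ht)).sub ((hasDerivAt_const t x).mul (hu1 t ht))
    exact this.congr_deriv (by simp only [id_eq]; ring)
  have hw1 : ∀ t ∈ ball (0:ℂ) r,
      HasDerivAt (fun s => (1 - x) * deriv u s + s * deriv (deriv u) s)
        ((2 - x) * deriv (deriv u) t + t * deriv (deriv (deriv u)) t) t := by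
    intro t ht
    have := ((hasDerivAt_const t ((1:ℂ) - x)).mul (hu2 t ht)).add
      ((hasDerivAt_id t).mul (hu3 t ht))
    exact this.congr_deriv (by simp only [id_eq]; ring)
  -- first derivative of v
  have hv1 : ∀ t ∈ ball (0:ℂ) (min r 1),
      HasDerivAt (fun s => (1 - s) ^ y * (s * deriv u s - x * u s))
        (-(y * (1 - t) ^ (y - 1)) * (t * deriv u t - x * u t)
          + (1 - t) ^ y * ((1 - x) * deriv u t + t * deriv (deriv u) t)) t := by
    intro t ht
    exact (hg y t ht).mul (hw t (hsub ht))
  refine ⟨fun t ht => (hv1 t ht).differentiableAt.differentiableWithinAt, by simp, ?_⟩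
  intro t ht
  have htr := hsub ht
  -- second derivative of v
  have hderiv1 : deriv (fun s => (1 - s) ^ y * (s * deriv u s - x * u s))
      =ᶠ[nhds t] fun s => -(y * (1 - s) ^ (y - 1)) * (s * deriv u s - x * u s)
          + (1 - s) ^ y * ((1 - x) * deriv u s + s * deriv (deriv u) s) := by
    filter_upwards [isOpen_ball.mem_nhds ht] with s hs using (hv1 s hs).deriv
  have hv2 : HasDerivAt (fun s => -(y * (1 - s) ^ (y - 1)) * (s * deriv u s - x * u s)
        + (1 - s) ^ y * ((1 - x) * deriv u s + s * deriv (deriv u) s))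
      (y * (y - 1) * (1 - t) ^ (y - 2) * (t * deriv u t - x * u t)
        + 2 * (-(y * (1 - t) ^ (y - 1))) * ((1 - x) * deriv u t + t * deriv (deriv u) t)
        + (1 - t) ^ y * ((2 - x) * deriv (deriv u) t + t * deriv (deriv (deriv u)) t)) t := by
    have hA : HasDerivAt (fun s : ℂ => -(y * (1 - s) ^ (y - 1)))
        (y * ((y - 1) * (1 - t) ^ (y - 2))) t := by
      have h := ((hg (y - 1) t ht).const_mul y).neg
      have he : y - 1 - 1 = y - 2 := by ring
      rw [he] at h
      exact h.congr_deriv (by ring)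
    have h2 := (hA.mul (hw t htr)).add ((hg y t ht).mul (hw1 t htr))
    exact h2.congr_deriv (by ring)
  have hvv : deriv (deriv (fun s => (1 - s) ^ y * (s * deriv u s - x * u s))) t
      = y * (y - 1) * (1 - t) ^ (y - 2) * (t * deriv u t - x * u t)
        + 2 * (-(y * (1 - t) ^ (y - 1))) * ((1 - x) * deriv u t + t * deriv (deriv u) t)
        + (1 - t) ^ y * ((2 - x) * deriv (deriv u) t + t * deriv (deriv (deriv u)) t) :=
    hderiv1.deriv_eq.trans hv2.deriv
  -- the ODE and its derivative
  have hE0 : t * (1 - t ^ 2) * deriv (deriv u) t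
      + ((1 - x) * (1 - t ^ 2) - 2 * t * y) * deriv u t
      + 2 * (x * y - z ^ 2) * u t = 0 := hode t htr
  have hEf : HasDerivAt (fun s => s * (1 - s ^ 2) * deriv (deriv u) s
        + ((1 - x) * (1 - s ^ 2) - 2 * s * y) * deriv u s + 2 * (x * y - z ^ 2) * u s)
      ((1 - 3 * t ^ 2) * deriv (deriv u) t + t * (1 - t ^ 2) * deriv (deriv (deriv u)) t
        + (-2 * t * (1 - x) - 2 * y) * deriv u t
        + ((1 - x) * (1 - t ^ 2) - 2 * t * y) * deriv (deriv u) t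
        + 2 * (x * y - z ^ 2) * deriv u t) t := by
    have hc : HasDerivAt (fun s : ℂ => s * (1 - s ^ 2)) (1 - 3 * t ^ 2) t := by
      have := (hasDerivAt_id t).mul ((hasDerivAt_const t (1:ℂ)).sub ((hasDerivAt_id t).pow 2))
      exact this.congr_deriv (by simp; ring)
    have hc2 : HasDerivAt (fun s : ℂ => (1 - x) * (1 - s ^ 2) - 2 * s * y)
        (-2 * t * (1 - x) - 2 * y) t := by
      have := (((hasDerivAt_const t (1:ℂ)).sub ((hasDerivAt_id t).pow 2)).const_mul (1 - x)).sub
        (((hasDerivAt_id t).const_mul (2:ℂ)).mul_const y)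
      exact this.congr_deriv (by simp; ring)
    have := ((hc.mul (hu3 t htr)).add (hc2.mul (hu2 t htr))).add
      ((hu1 t htr).const_mul (2 * (x * y - z ^ 2)))
    exact this.congr_deriv (by ring)
  have hE1 : (1 - 3 * t ^ 2) * deriv (deriv u) t
      + t * (1 - t ^ 2) * deriv (deriv (deriv u)) t
      + (-2 * t * (1 - x) - 2 * y) * deriv u t
      + ((1 - x) * (1 - t ^ 2) - 2 * t * y) * deriv (deriv u) t
      + 2 * (x * y - z ^ 2) * deriv u t = 0 := by
    have heq : (fun s => s * (1 - s ^ 2) * deriv (deriv u) s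
        + ((1 - x) * (1 - s ^ 2) - 2 * s * y) * deriv u s + 2 * (x * y - z ^ 2) * u s)
        =ᶠ[nhds t] (fun _ => (0:ℂ)) := by
      filter_upwards [isOpen_ball.mem_nhds htr] with s hs using hode s hs
    have h0 : deriv (fun s => s * (1 - s ^ 2) * deriv (deriv u) s
        + ((1 - x) * (1 - s ^ 2) - 2 * s * y) * deriv u s + 2 * (x * y - z ^ 2) * u s) t = 0 := by
      rw [heq.deriv_eq]; simp
    rw [← hEf.deriv]; exact h0
  -- cpow relations
  have hc1 : (1 - t) ^ (y - 1) = (1 - t) ^ (y - 2) * (1 - t) := by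
    have hy : y - 1 = (y - 2) + 1 := by ring
    rw [hy, cpow_add _ _ (h1t t ht), cpow_one]
  have hc2 : (1 - t) ^ y = (1 - t) ^ (y - 2) * (1 - t) * (1 - t) := by
    nth_rewrite 1 [show y = (y - 2) + 1 + 1 by ring]
    rw [cpow_add _ _ (h1t t ht), cpow_add _ _ (h1t t ht), cpow_one]
  rw [hvv, (hv1 t ht).deriv, hc1, hc2]
  linear_combination ((1 - t) ^ (y - 2) * t * (1 - t) ^ 2) * hE1
    - ((1 - t) ^ (y - 2) * x * (1 - t) ^ 2) * hE0

end
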